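/- Let β > 1. Any admissible word ending with a nonempty prefix of ε(1,β) is not full. That is, if w = w₁⋯w_{n−s}ε₁⋯ε_s ∈ Σ_β^n for some 1 ≤ s ≤ n, where ε₁⋯ε_s is the prefix of the β-expansion of 1, then w is not full. -/
import Mathlib


noncomputable def Tb (β x : ℝ) : ℝ := β * x - ⌊β * x⌋

/-- The (i+1)-th digit of the β-expansion of x (0-indexed). -/
noncomputable def dig (β x : ℝ) (i : ℕ) : ℕ := (⌊β * (Tb β)^[i] x⌋).toNat

/-- w is an admissible word for base β. -/
def Adm (β : ℝ) (w : List ℕ) : Prop :=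
  ∃ x, x ∈ Set.Ico (0:ℝ) 1 ∧ ∀ i (h : i < w.length), w[i] = dig β x i

/-- u is an admissible digit sequence for base β. -/
def AdmSeq (β : ℝ) (u : ℕ → ℕ) : Prop :=
  ∃ x, x ∈ Set.Ico (0:ℝ) 1 ∧ ∀ i, u i = dig β x i

/-- The cylinder I(w) ⊆ [0,1). -/
def cyl (β : ℝ) (w : List ℕ) : Set ℝ :=
  {x | x ∈ Set.Ico (0:ℝ) 1 ∧ ∀ i (h : i < w.length), w[i] = dig β x i}

/-- w is a full word: T_β^{|w|} maps I(w) onto [0,1). -/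
def Full (β : ℝ) (w : List ℕ) : Prop :=
  (Tb β)^[w.length] '' cyl β w = Set.Ico 0 1

/-- The β-expansion of 1 is finite with length M. -/
def FiniteLen (β : ℝ) (M : ℕ) : Prop :=
  0 < M ∧ dig β 1 (M-1) ≠ 0 ∧ ∀ j, M ≤ j → dig β 1 j = 0

open Classical in
/-- The (i+1)-th digit of the modified β-expansion ε*(1,β) (0-indexed). -/
noncomputable def modExp (β : ℝ) (i : ℕ) : ℕ :=
  if h : ∃ M, FiniteLen β M then
    (if (i+1) % (Nat.find h) = 0 then dig β 1 (Nat.find h - 1) - 1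
     else dig β 1 (i % Nat.find h))
  else dig β 1 i

/-- View a finite word as the sequence w0^∞. -/
def wordSeq (w : List ℕ) (i : ℕ) : ℕ := w.getD i 0

/-- Strict lexicographic order on sequences. -/
def seqLt (u v : ℕ → ℕ) : Prop := ∃ k, (∀ i, i < k → u i = v i) ∧ u k < v k

/-- Strict lexicographic order on finite words (identified with w0^∞). -/
def wlt (u v : List ℕ) : Prop := seqLt (wordSeq u) (wordSeq v)

/-- Concatenation of a finite word with a sequence. -/
def catSeq (w : List ℕ) (u : ℕ → ℕ) (i : ℕ) : ℕ :=
  if h : i < w.length then w[i] else u (i - w.length)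

open Classical in
/-- The largest position k ≤ s with ε_k ≠ 0 (greedy step). -/
noncomputable def greedyStep (β : ℝ) (s : ℕ) : ℕ :=
  Nat.findGreatest (fun k => 1 ≤ k ∧ dig β 1 (k-1) ≠ 0) s

/-- τ_β(s): number of terms in the greedy representation of s by nonzero positions. -/
noncomputable def tau (β : ℝ) : ℕ → ℕ
  | 0 => 0
  | s + 1 => tau β (s - (greedyStep β (s+1) - 1)) + 1
decreasing_by omega

open Classical in
/-- r_s(β): maximal length of a string of 0's in ε₁*⋯ε_s*. -/
noncomputable def rrun (β : ℝ) (s : ℕ) : ℕ :=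
  Nat.findGreatest (fun k => 1 ≤ k ∧ ∃ i, i + k ≤ s ∧ ∀ t, t < k → modExp β (i + t) = 0) s

/-- v is the immediate successor of u in the lexicographic order on Σ_β^n. -/
def SuccIn (β : ℝ) (n : ℕ) (u v : List ℕ) : Prop :=
  u.length = n ∧ v.length = n ∧ Adm β u ∧ Adm β v ∧ wlt u v ∧
  ¬ ∃ z : List ℕ, z.length = n ∧ Adm β z ∧ wlt u z ∧ wlt z v

/-- There is a run of l consecutive non-full words in Σ_β^n. -/
def NonFullRun (β : ℝ) (n l : ℕ) : Prop :=
  ∃ f : ℕ → List ℕ,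
    (∀ j, j < l → (f j).length = n ∧ Adm β (f j) ∧ ¬ Full β (f j)) ∧
    (∀ j, j + 1 < l → SuccIn β n (f j) (f (j+1)))

/-- There is a maximal run of l consecutive non-full words in Σ_β^n. -/
def MaxNonFullRun (β : ℝ) (n l : ℕ) : Prop :=
  0 < l ∧ ∃ f : ℕ → List ℕ,
    (∀ j, j < l → (f j).length = n ∧ Adm β (f j) ∧ ¬ Full β (f j)) ∧
    (∀ j, j + 1 < l → SuccIn β n (f j) (f (j+1))) ∧
    (∀ u, SuccIn β n u (f 0) → Full β u) ∧
    (∀ u, SuccIn β n (f (l-1)) u → Full β u)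

/-- There is a maximal run of l consecutive full words in Σ_β^n. -/
def MaxFullRun (β : ℝ) (n l : ℕ) : Prop :=
  0 < l ∧ ∃ f : ℕ → List ℕ,
    (∀ j, j < l → (f j).length = n ∧ Adm β (f j) ∧ Full β (f j)) ∧
    (∀ j, j + 1 < l → SuccIn β n (f j) (f (j+1))) ∧
    (∀ u, SuccIn β n u (f 0) → ¬ Full β u) ∧
    (∀ u, SuccIn β n (f (l-1)) u → ¬ Full β u)

/-- The canonical decomposition of an admissible word, as in the structure theorem:
p.1 is the list of block lengths k₁,…,k_p and p.2 is the final length l. -/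
def Decomp (β : ℝ) (w : List ℕ) (p : List ℕ × ℕ) : Prop :=
  1 ≤ p.2 ∧ (∀ k ∈ p.1, 1 ≤ k) ∧ p.1.sum + p.2 = w.length ∧
  (∀ j, j < p.1.length →
    (∀ t, t < p.1.getD j 0 - 1 → w.getD ((p.1.take j).sum + t) 0 = dig β 1 t) ∧
    w.getD ((p.1.take j).sum + (p.1.getD j 0 - 1)) 0 < dig β 1 (p.1.getD j 0 - 1)) ∧
  (∀ t, t < p.2 - 1 → w.getD (p.1.sum + t) 0 = dig β 1 t) ∧
  w.getD (p.1.sum + (p.2 - 1)) 0 ≤ dig β 1 (p.2 - 1)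


lemma Tb_mem (β x : ℝ) : Tb β x ∈ Set.Ico (0:ℝ) 1 := by
  have h1 : Tb β x = Int.fract (β * x) := rfl
  rw [h1]
  exact ⟨Int.fract_nonneg _, Int.fract_lt_one _⟩

lemma Tb_iter_mem (β x : ℝ) (hx : x ∈ Set.Ico (0:ℝ) 1) (m : ℕ) :
    (Tb β)^[m] x ∈ Set.Ico (0:ℝ) 1 := by
  cases m with
  | zero => exact hx
  | succ k => rw [Function.iterate_succ_apply']; exact Tb_mem β _

lemma key8 (β : ℝ) (hβ : 1 < β) (y : ℝ) (hy : y ∈ Set.Ico (0:ℝ) 1) (s : ℕ)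
    (hd : ∀ i, i < s → dig β y i = dig β 1 i) :
    ∀ j, j ≤ s → (Tb β)^[j] y = (Tb β)^[j] 1 - β^j * (1 - y) := by
  intro j
  induction j with
  | zero => simp
  | succ j ih =>
    intro hj
    have ihj := ih (Nat.le_of_succ_le hj)
    have hynn : 0 ≤ (Tb β)^[j] y := (Tb_iter_mem β y hy j).1
    have h1nn : 0 ≤ (Tb β)^[j] (1:ℝ) := by
      cases j with
      | zero => norm_num
      | succ k => rw [Function.iterate_succ_apply']; exact (Tb_mem β _).1
    have hb0 : (0:ℝ) ≤ β := le_of_lt (lt_trans one_pos hβ)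
    have hfl : ⌊β * (Tb β)^[j] y⌋ = ⌊β * (Tb β)^[j] 1⌋ := by
      have h1 : (0:ℤ) ≤ ⌊β * (Tb β)^[j] y⌋ := Int.floor_nonneg.2 (mul_nonneg hb0 hynn)
      have h2 : (0:ℤ) ≤ ⌊β * (Tb β)^[j] (1:ℝ)⌋ := Int.floor_nonneg.2 (mul_nonneg hb0 h1nn)
      have h3 := hd j hj
      unfold dig at h3
      omega
    rw [Function.iterate_succ_apply', Function.iterate_succ_apply']
    show β * (Tb β)^[j] y - ⌊β * (Tb β)^[j] y⌋ = _
    rw [hfl, ihj]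
    show _ = (β * (Tb β)^[j] 1 - ⌊β * (Tb β)^[j] 1⌋) - β ^ (j+1) * (1 - y)
    ring

/-- an admissible word ending with a nonempty prefix of ε(1,β) is not full. -/
theorem stmt8 (β : ℝ) (hβ : 1 < β) (w u : List ℕ) (s : ℕ) (hs : 1 ≤ s)
    (hdec : w = u ++ List.ofFn (fun i : Fin s => dig β 1 i)) (h : Adm β w) :
    ¬ Full β w := by
  intro hfull
  have hlen : w.length = u.length + s := by rw [hdec]; simp
  have hc : (Tb β)^[s] (1:ℝ) ∈ Set.Ico (0:ℝ) 1 := by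
    obtain ⟨k, rfl⟩ := Nat.exists_eq_add_of_le hs
    rw [add_comm, Function.iterate_succ_apply']
    exact Tb_mem β _
  have hmem : (Tb β)^[s] (1:ℝ) ∈ (Tb β)^[w.length] '' cyl β w := by
    rw [hfull]; exact hc
  obtain ⟨x, hx, hxc⟩ := hmem
  set y := (Tb β)^[u.length] x with hy_def
  have hy : y ∈ Set.Ico (0:ℝ) 1 := Tb_iter_mem β x hx.1 _
  have hd : ∀ i, i < s → dig β y i = dig β 1 i := by
    intro i hi
    have hidx : u.length + i < w.length := by omega
    have h1 : w[u.length + i]'hidx = dig β x (u.length + i) := hx.2 _ hidx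
    have h2 : w[u.length + i]'hidx = dig β 1 i := by
      subst hdec
      rw [List.getElem_append_right (by omega)]
      simp
    have h3 : dig β x (u.length + i) = dig β y i := by
      unfold dig
      rw [add_comm, Function.iterate_add_apply]
    rw [← h3, ← h1, h2]
  have hkey := key8 β hβ y hy s hd s le_rfl
  have hys : (Tb β)^[s] y = (Tb β)^[w.length] x := by
    rw [hlen, add_comm, Function.iterate_add_apply]
  rw [hys, hxc] at hkey
  have hβs : 0 < β ^ s := pow_pos (lt_trans one_pos hβ) s
  nlinarith [hy.2]
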